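/- For every integer n ≥ 3, the Boolean dimension of the Kelly poset K_n is at most 4. -/

import Mathlib

/-- A linear order on the ground set `α` (not necessarily an extension of the partial order). -/
structure LinOrdOn (α : Type*) where
  rel : α → α → Prop
  refl : ∀ x, rel x x
  antisymm : ∀ x y, rel x y → rel y x → x = y
  trans : ∀ x y z, rel x y → rel y z → rel x z
  total : ∀ x y, rel x y ∨ rel y x

/-- `(𝓑, τ)` is a Boolean realizer: for distinct `x, y`, `x < y` in the poset iff `τ`
evaluates to true on the bit string whose `i`-th coordinate records whether `x < y`
in the linear order `B i`. -/
def IsBooleanRealizer {α : Type*} [PartialOrder α] {d : ℕ}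
    (B : Fin d → LinOrdOn α) (τ : (Fin d → Prop) → Prop) : Prop :=
  ∀ x y : α, x ≠ y → (x < y ↔ τ (fun i => (B i).rel x y ∧ x ≠ y))

/-- The Boolean dimension. -/
noncomputable def boolDim (α : Type*) [PartialOrder α] : ℕ :=
  sInf {d : ℕ | 0 < d ∧ ∃ B : Fin d → LinOrdOn α, ∃ τ : (Fin d → Prop) → Prop,
    IsBooleanRealizer B τ}


/-- The elements of the Kelly poset `K n`:
`a 1, …, a n`, `b 1, …, b n`, `w 1, …, w (n-1)`, `z 1, …, z (n-1)`. -/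
inductive KElt (n : ℕ) : Type
  | a : Fin n → KElt n
  | b : Fin n → KElt n
  | w : Fin (n - 1) → KElt n
  | z : Fin (n - 1) → KElt n

namespace KElt

/-- Inclusion `Fin (n-1) → Fin n` keeping the value. -/
def lo {n : ℕ} (i : Fin (n - 1)) : Fin n := ⟨i.val, by have := i.isLt; omega⟩

/-- The map `Fin (n-1) → Fin n` sending `i` to `i + 1`. -/
def hi {n : ℕ} (i : Fin (n - 1)) : Fin n := ⟨i.val + 1, by have := i.isLt; omega⟩

/-- The defining relations (cover relations) of the Kelly poset, with indices written
0-based: `aᵢ < wᵢ`, `wᵢ < bᵢ₊₁`, `wᵢ < wᵢ₊₁`, `aᵢ₊₁ < zᵢ`, `zᵢ < bᵢ`, `zᵢ₊₁ < zᵢ`. -/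
inductive kcov {n : ℕ} : KElt n → KElt n → Prop
  | aw (i : Fin (n - 1)) : kcov (.a (lo i)) (.w i)
  | wb (i : Fin (n - 1)) : kcov (.w i) (.b (hi i))
  | ww (i j : Fin (n - 1)) : j.val = i.val + 1 → kcov (.w i) (.w j)
  | az (i : Fin (n - 1)) : kcov (.a (hi i)) (.z i)
  | zb (i : Fin (n - 1)) : kcov (.z i) (.b (lo i))
  | zz (i j : Fin (n - 1)) : j.val = i.val + 1 → kcov (.z j) (.z i)

/-- A measure that strictly increases along the defining relations. -/
def kmeas {n : ℕ} : KElt n → ℕ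
  | .a _ => 0
  | .w i => i.val + 1
  | .z i => n - i.val
  | .b _ => n + 1

theorem kcov_meas {n : ℕ} {x y : KElt n} (h : kcov x y) : kmeas x < kmeas y := by
  cases h with
  | aw i => simp [kmeas]
  | wb i => have := i.isLt; simp [kmeas]; omega
  | ww i j h => have := i.isLt; simp [kmeas]; omega
  | az i => have := i.isLt; simp [kmeas]; omega
  | zb i => have := i.isLt; simp [kmeas] <;> omega
  | zz i j h => have := i.isLt; have := j.isLt; simp [kmeas]; omega

theorem rtg_meas {n : ℕ} {x y : KElt n} (h : Relation.ReflTransGen kcov x y) :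
    kmeas x ≤ kmeas y := by
  induction h with
  | refl => exact le_rfl
  | tail _ hc ih => exact le_trans ih (le_of_lt (kcov_meas hc))

/-- The Kelly poset: reflexive–transitive closure of the defining relations. -/
instance (n : ℕ) : PartialOrder (KElt n) where
  le := Relation.ReflTransGen kcov
  le_refl _ := Relation.ReflTransGen.refl
  le_trans _ _ _ := Relation.ReflTransGen.trans
  le_antisymm := by
    intro x y hxy hyx
    rcases Relation.ReflTransGen.cases_head hxy with rfl | ⟨c, hc, hcy⟩
    · rfl
    · exfalso
      have h1 : kmeas x < kmeas c := kcov_meas hc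
      have h2 : kmeas c ≤ kmeas y := rtg_meas hcy
      have h3 : kmeas y ≤ kmeas x := rtg_meas hyx
      omega

/-- Explicit description of the strict order on the Kelly poset. -/
def S {n : ℕ} : KElt n → KElt n → Prop
  | .a k, .w i => k.val ≤ i.val
  | .a k, .z i => i.val < k.val
  | .a k, .b m => k.val ≠ m.val
  | .w i, .w j => i.val < j.val
  | .w i, .b m => i.val < m.val
  | .z i, .z j => j.val < i.val
  | .z i, .b m => m.val ≤ i.val
  | _, _ => False

theorem cov_S {n : ℕ} {x y : KElt n} (h : kcov x y) : S x y := by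
  cases h with
  | aw i => simp [S, lo]
  | wb i => simp [S, hi]
  | ww i j h => simp [S]; omega
  | az i => simp [S, hi]
  | zb i => simp [S, lo]
  | zz i j h => simp [S]; omega

theorem S_trans {n : ℕ} {x y z : KElt n} (hxy : S x y) (hyz : S y z) : S x z := by
  cases x <;> cases y <;> cases z <;> simp_all only [S] <;> omega

theorem S_irrefl {n : ℕ} (x : KElt n) : ¬ S x x := by
  cases x <;> simp [S]

theorem le_of_kcov {n : ℕ} {x y : KElt n} (h : kcov x y) : x ≤ y :=
  Relation.ReflTransGen.single h

theorem w_mono {n : ℕ} (i j : Fin (n - 1)) (h : i.val ≤ j.val) :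
    (KElt.w i : KElt n) ≤ KElt.w j := by
  obtain ⟨d, hd⟩ : ∃ d, j.val = i.val + d := ⟨j.val - i.val, by omega⟩
  clear h
  induction d generalizing j with
  | zero =>
    have : j = i := Fin.ext (by omega)
    rw [this]
  | succ m ih =>
    have hm : i.val + m < n - 1 := by have := j.isLt; omega
    have h1 : (KElt.w i : KElt n) ≤ KElt.w ⟨i.val + m, hm⟩ := ih ⟨i.val + m, hm⟩ rfl
    exact h1.trans (le_of_kcov (kcov.ww ⟨i.val + m, hm⟩ j (by show j.val = i.val + m + 1; omega)))

theorem z_anti {n : ℕ} (i j : Fin (n - 1)) (h : i.val ≤ j.val) :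
    (KElt.z j : KElt n) ≤ KElt.z i := by
  obtain ⟨d, hd⟩ : ∃ d, j.val = i.val + d := ⟨j.val - i.val, by omega⟩
  clear h
  induction d generalizing j with
  | zero =>
    have : j = i := Fin.ext (by omega)
    rw [this]
  | succ m ih =>
    have hm : i.val + m < n - 1 := by have := j.isLt; omega
    have h1 : (KElt.z ⟨i.val + m, hm⟩ : KElt n) ≤ KElt.z i := ih ⟨i.val + m, hm⟩ rfl
    exact (le_of_kcov (kcov.zz ⟨i.val + m, hm⟩ j (by show j.val = i.val + m + 1; omega))).trans h1

theorem S_le {n : ℕ} : ∀ {x y : KElt n}, S x y → x ≤ y := by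
  intro x y h
  cases x <;> cases y <;> simp only [S] at h
  case a.w k i =>
    -- a_k ≤ w_k ≤ w_i
    have hk : k.val < n - 1 := lt_of_le_of_lt h i.isLt
    have e : lo ⟨k.val, hk⟩ = k := Fin.ext rfl
    have c := kcov.aw (n := n) ⟨k.val, hk⟩
    rw [e] at c
    exact (le_of_kcov c).trans (w_mono _ i h)
  case a.z k i =>
    -- a_k ≤ z_{k-1} ≤ z_i
    have hk : k.val - 1 < n - 1 := by have := k.isLt; omega
    have e : hi ⟨k.val - 1, hk⟩ = k := Fin.ext (by show k.val - 1 + 1 = k.val; omega)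
    have c := kcov.az (n := n) ⟨k.val - 1, hk⟩
    rw [e] at c
    exact (le_of_kcov c).trans (z_anti i ⟨k.val - 1, hk⟩ (by show i.val ≤ k.val - 1; omega))
  case a.b k m =>
    rcases Nat.lt_or_ge k.val m.val with hlt | hge
    · -- a_k ≤ w_k ≤ w_{m-1} ≤ b_m
      have hk : k.val < n - 1 := by have := m.isLt; omega
      have hm1 : m.val - 1 < n - 1 := by have := m.isLt; omega
      have e : lo ⟨k.val, hk⟩ = k := Fin.ext rfl
      have c := kcov.aw (n := n) ⟨k.val, hk⟩
      rw [e] at c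
      have e2 : hi ⟨m.val - 1, hm1⟩ = m := Fin.ext (by show m.val - 1 + 1 = m.val; omega)
      have c2 := kcov.wb (n := n) ⟨m.val - 1, hm1⟩
      rw [e2] at c2
      exact (le_of_kcov c).trans ((w_mono ⟨k.val, hk⟩ ⟨m.val - 1, hm1⟩ (by show k.val ≤ m.val - 1; omega)).trans
        (le_of_kcov c2))
    · have hlt : m.val < k.val := by omega
      -- a_k ≤ z_{k-1} ≤ z_m ≤ b_m
      have hk : k.val - 1 < n - 1 := by have := k.isLt; omega
      have hm : m.val < n - 1 := by have := k.isLt; omega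
      have e : hi ⟨k.val - 1, hk⟩ = k := Fin.ext (by show k.val - 1 + 1 = k.val; omega)
      have c := kcov.az (n := n) ⟨k.val - 1, hk⟩
      rw [e] at c
      have e2 : lo ⟨m.val, hm⟩ = m := Fin.ext rfl
      have c2 := kcov.zb (n := n) ⟨m.val, hm⟩
      rw [e2] at c2
      exact (le_of_kcov c).trans ((z_anti ⟨m.val, hm⟩ ⟨k.val - 1, hk⟩ (by show m.val ≤ k.val - 1; omega)).trans
        (le_of_kcov c2))
  case w.w i j => exact w_mono i j (le_of_lt h)
  case w.b i m =>
    have hm1 : m.val - 1 < n - 1 := by have := m.isLt; omega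
    have e2 : hi ⟨m.val - 1, hm1⟩ = m := Fin.ext (by show m.val - 1 + 1 = m.val; omega)
    have c2 := kcov.wb (n := n) ⟨m.val - 1, hm1⟩
    rw [e2] at c2
    exact (w_mono i ⟨m.val - 1, hm1⟩ (by show i.val ≤ m.val - 1; omega)).trans (le_of_kcov c2)
  case z.z i j => exact z_anti j i (le_of_lt h)
  case z.b i m =>
    have hm : m.val < n - 1 := lt_of_le_of_lt h i.isLt
    have e2 : lo ⟨m.val, hm⟩ = m := Fin.ext rfl
    have c2 := kcov.zb (n := n) ⟨m.val, hm⟩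
    rw [e2] at c2
    exact (z_anti ⟨m.val, hm⟩ i h).trans (le_of_kcov c2)

theorem le_iff_S {n : ℕ} {x y : KElt n} : x ≤ y ↔ x = y ∨ S x y := by
  constructor
  · intro h
    induction h with
    | refl => exact Or.inl rfl
    | tail _ hc ih =>
      rcases ih with rfl | hS
      · exact Or.inr (cov_S hc)
      · exact Or.inr (S_trans hS (cov_S hc))
  · rintro (rfl | h)
    · exact le_refl _
    · exact S_le h

theorem lt_iff_S {n : ℕ} {x y : KElt n} : x < y ↔ S x y := by
  rw [lt_iff_le_and_ne, le_iff_S]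
  constructor
  · rintro ⟨rfl | h, hne⟩
    · exact absurd rfl hne
    · exact h
  · intro h
    refine ⟨Or.inr h, fun e => S_irrefl x ?_⟩
    exact e ▸ h

/-- Four injective integer keys on the Kelly poset; each induces a linear order. -/
def keyf (n : ℕ) : ℕ → KElt n → ℕ
  | 0, .a k => 4 * k.val + 2 * n
  | 0, .w i => 4 * i.val + 2 * n + 1
  | 0, .b m => 4 * m.val + 2 * n - 2
  | 0, .z i => i.val
  | 1, .a k => 4 * (n - k.val)
  | 1, .b m => 4 * (n - m.val) - 2
  | 1, .z i => 4 * (n - i.val) - 3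
  | 1, .w i => 8 * n + i.val
  | 2, .a k => k.val
  | 2, .w i => n + i.val
  | 2, .z i => 3 * n - i.val
  | 2, .b m => 4 * n + m.val
  | _, .w i => i.val
  | _, .a k => 2 * n - k.val
  | _, .b m => 4 * n - m.val
  | _, .z i => 6 * n - i.val

theorem keyf_inj {n : ℕ} (hn : 3 ≤ n) (t : ℕ) : Function.Injective (keyf n t) := by
  rintro (k | k | k | k) (m | m | m | m) h <;>
    have hk := k.isLt <;> have hm := m.isLt <;>
    match t with
    | 0 | 1 | 2 | (_+3) =>
      first
        | (simp only [keyf] at h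
           first
             | rfl
             | (exact absurd h (by omega))
             | (congr 1; exact Fin.ext (by omega)))

/-- The linear order induced by an injective key. -/
def ordOfKey {α : Type*} (f : α → ℕ) (hf : Function.Injective f) : LinOrdOn α where
  rel x y := f x ≤ f y
  refl _ := le_rfl
  antisymm _ _ h1 h2 := hf (le_antisymm h1 h2)
  trans _ _ _ := le_trans
  total _ _ := le_total _ _

end KElt

/-- The Boolean dimension of the Kelly poset `K_n` is at most `4` for `n ≥ 3`. -/
theorem boolDim_kelly_le_four (n : ℕ) (hn : 3 ≤ n) :
    boolDim (KElt n) ≤ 4 := by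
  unfold boolDim
  apply Nat.sInf_le
  refine ⟨by norm_num, fun i => KElt.ordOfKey (KElt.keyf n i.val) (KElt.keyf_inj hn i.val),
    fun q => (q 2 ∧ q 3 ∧ (q 0 ∨ q 1)) ∨ (q 2 ∧ ¬ q 3 ∧ q 0 ∧ q 1), ?_⟩
  intro x y hxy
  rw [KElt.lt_iff_S]
  simp only [KElt.ordOfKey, show ((0 : Fin 4) : ℕ) = 0 from rfl,
    show ((1 : Fin 4) : ℕ) = 1 from rfl, show ((2 : Fin 4) : ℕ) = 2 from rfl,
    show ((3 : Fin 4) : ℕ) = 3 from rfl]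
  cases x <;> cases y <;>
    · rename_i p q
      have hp := p.isLt
      have hq := q.isLt
      simp only [KElt.S, KElt.keyf, ne_eq, KElt.a.injEq, KElt.b.injEq, KElt.w.injEq,
        KElt.z.injEq, Fin.ext_iff, reduceCtorEq, not_false_eq_true, and_true, iff_false,
        not_true_eq_false, and_false, false_and, or_false, false_or, iff_true,
        false_iff, true_iff]
      omega
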